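/- Under the sink structure hypotheses, there exists a unique matrix H ∈ ℝ^{n×s} with nonnegative entries such that H𝟙 = 𝟙 (each row sums to 1), LH = 0, and for every k: H_{ik} = 1 for all i ∈ S_k and H_{ik} = 0 for all i ∈ S_{−k}. -/

import Mathlib

open Matrix

/-- Discrete minimum principle: a function harmonic off the sinks and
nonnegative on the sinks is nonnegative everywhere. -/
lemma sink_min_principle {n s : ℕ} (W : Matrix (Fin n) (Fin n) ℝ)
    (hWnn : ∀ i j, 0 ≤ W i j)
    (S : Fin s → Finset (Fin n))
    (hreach : ∀ i : Fin n, (∀ k, i ∉ S k) →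
      ∃ j : Fin n, (∃ k, j ∈ S k) ∧ Relation.TransGen (fun a b => 0 < W a b) i j)
    (v : Fin n → ℝ)
    (hharm : ∀ i, (∀ k, i ∉ S k) → (∑ j, W i j) * v i = ∑ j, W i j * v j)
    (hsink : ∀ j k, j ∈ S k → 0 ≤ v j) :
    ∀ i, 0 ≤ v i := by
  by_contra hcon
  push_neg at hcon
  obtain ⟨i0, hi0⟩ := hcon
  have hne : (Finset.univ : Finset (Fin n)).Nonempty := ⟨i0, Finset.mem_univ _⟩
  set m := Finset.univ.inf' hne v with hm
  have hml : ∀ j, m ≤ v j := fun j => Finset.inf'_le _ (Finset.mem_univ j)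
  have hmneg : m < 0 := lt_of_le_of_lt (hml i0) hi0
  have hstep : ∀ b c, v b = m → 0 < W b c → v c = m := by
    intro b c hb hbc
    have hbR : ∀ k, b ∉ S k := by
      intro k hk
      have := hsink b k hk
      rw [hb] at this; linarith
    have h1 := hharm b hbR
    have hsum0 : ∑ j, W b j * (v j - m) = 0 := by
      have he : ∑ j, W b j * (v j - m) = (∑ j, W b j * v j) - (∑ j, W b j) * m := by
        simp [mul_sub, Finset.sum_sub_distrib, Finset.sum_mul]
      rw [he, ← h1, hb]; ring
    have hterm := (Finset.sum_eq_zero_iff_of_nonneg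
      (fun j _ => mul_nonneg (hWnn b j) (by linarith [hml j]))).mp hsum0 c (Finset.mem_univ c)
    rcases mul_eq_zero.mp hterm with h | h
    · exact absurd h (ne_of_gt hbc)
    · linarith
  obtain ⟨a, -, ha⟩ := Finset.exists_mem_eq_inf' hne v
  have haR : ∀ k, a ∉ S k := by
    intro k hk
    have := hsink a k hk
    rw [← ha] at this; linarith
  obtain ⟨j, ⟨k, hjk⟩, hpath⟩ := hreach a haR
  have hvj : ∀ x, Relation.TransGen (fun a b => 0 < W a b) a x → v x = m := by
    intro x hx
    induction hx with
    | single h => exact hstep _ _ ha.symm h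
    | tail hp h ih => exact hstep _ _ ih h
  have := hsink j k hjk
  rw [hvj j hpath] at this
  linarith

/-- Under the sink structure hypotheses, there is a unique nonnegative
matrix `H ∈ ℝ^{n×s}` with `H𝟙 = 𝟙`, `LH = 0`, `H_{ik} = 1` on `S_k` and `H_{ik} = 0`
on `S_{−k}`. -/
theorem stmt_5 {n s : ℕ} (hn : 1 ≤ n) (hs : 1 ≤ s)
    (W : Matrix (Fin n) (Fin n) ℝ)
    (hWnn : ∀ i j, 0 ≤ W i j)
    (hrow : ∀ i, 0 < ∑ j, W i j)
    (S : Fin s → Finset (Fin n))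
    (hSne : ∀ k, (S k).Nonempty)
    (hSdisj : ∀ k l, k ≠ l → Disjoint (S k) (S l))
    (hsink : ∀ k, ∀ i ∈ S k, ∀ j, j ∉ S k → W i j = 0)
    (hSirr : ∀ k, ∀ i ∈ S k, ∀ j ∈ S k, i ≠ j →
      Relation.TransGen (fun a b => a ∈ S k ∧ b ∈ S k ∧ 0 < W a b) i j)
    (hreach : ∀ i : Fin n, (∀ k, i ∉ S k) →
      ∃ j : Fin n, (∃ k, j ∈ S k) ∧ Relation.TransGen (fun a b => 0 < W a b) i j)
    (L : Matrix (Fin n) (Fin n) ℝ)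
    (hL : L = Matrix.diagonal (fun i => ∑ j, W i j) - W) :
    ∃! H : Matrix (Fin n) (Fin s) ℝ,
      (∀ i k, 0 ≤ H i k) ∧
      (∀ i, ∑ k, H i k = 1) ∧
      L * H = 0 ∧
      (∀ k, ∀ i ∈ S k, H i k = 1) ∧
      (∀ k l, l ≠ k → ∀ i ∈ S l, H i k = 0) := by
  classical
  have hdisj' : ∀ (i : Fin n) k l, i ∈ S k → i ∈ S l → k = l := by
    intro i k l hk hl
    by_contra h
    exact Finset.disjoint_left.mp (hSdisj k l h) hk hl
  have hLmv : ∀ (v : Fin n → ℝ) (i), (L *ᵥ v) i = (∑ j, W i j) * v i - ∑ j, W i j * v j := by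
    intro v i
    have h0 : (L *ᵥ v) i = ∑ j, L i j * v j := rfl
    rw [h0]
    simp only [hL, Matrix.sub_apply, Matrix.diagonal_apply, sub_mul, ite_mul, zero_mul]
    rw [Finset.sum_sub_distrib, Finset.sum_ite_eq]
    simp
  let Φ : (Fin n → ℝ) →ₗ[ℝ] (Fin n → ℝ) :=
    LinearMap.pi (fun i => if (∀ k, i ∉ S k) then (LinearMap.proj i).comp L.mulVecLin
      else LinearMap.proj i)
  have hΦ : ∀ (v : Fin n → ℝ) (i), Φ v i = if (∀ k, i ∉ S k) then (L *ᵥ v) i else v i := by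
    intro v i
    simp only [Φ, LinearMap.pi_apply]
    split <;> rfl
  have hker : ∀ v, Φ v = 0 → v = 0 := by
    intro v hv
    have hvi : ∀ i, Φ v i = 0 := fun i => congrFun hv i
    have hharm : ∀ i, (∀ k, i ∉ S k) → (∑ j, W i j) * v i = ∑ j, W i j * v j := by
      intro i hi
      have h := hvi i
      rw [hΦ, if_pos hi, hLmv] at h
      linarith
    have hzero : ∀ j k, j ∈ S k → v j = 0 := by
      intro j k hj
      have h := hvi j
      rwa [hΦ, if_neg (by push_neg; exact ⟨k, hj⟩)] at h
    have h1 := sink_min_principle W hWnn S hreach v hharm (fun j k hj => (hzero j k hj).ge)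
    have h2 := sink_min_principle W hWnn S hreach (fun i => -v i)
      (fun i hi => by
        simp only [mul_neg]
        rw [Finset.sum_neg_distrib]
        exact neg_inj.mpr (hharm i hi))
      (fun j k hj => by simp [hzero j k hj])
    funext i
    have ha := h1 i
    have hb := h2 i
    simp only [Pi.zero_apply]
    linarith
  have hinj : Function.Injective Φ := LinearMap.ker_eq_bot.mp (LinearMap.ker_eq_bot'.mpr hker)
  have hsurj : Function.Surjective Φ := LinearMap.injective_iff_surjective.mp hinj
  choose y hy using fun k : Fin s =>
    hsurj (fun i => if (∀ l, i ∉ S l) then 0 else if i ∈ S k then 1 else 0)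
  have hyS : ∀ k l i, i ∈ S l → y k i = if l = k then 1 else 0 := by
    intro k l i hi
    have hnR : ¬(∀ m, i ∉ S m) := by push_neg; exact ⟨l, hi⟩
    have h := congrFun (hy k) i
    simp only [hΦ, if_neg hnR] at h
    rw [h]
    by_cases hlk : l = k
    · subst hlk
      rw [if_pos hi, if_pos rfl]
    · rw [if_neg (fun hik => hlk (hdisj' i l k hi hik)), if_neg hlk]
  have hyR : ∀ k i, (∀ m, i ∉ S m) → (∑ j, W i j) * y k i = ∑ j, W i j * y k j := by
    intro k i hi
    have h := congrFun (hy k) i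
    simp only [hΦ, if_pos hi, hLmv] at h
    linarith
  have hharmAll : ∀ k i, (∑ j, W i j) * y k i = ∑ j, W i j * y k j := by
    intro k i
    by_cases hiR : ∀ m, i ∉ S m
    · exact hyR k i hiR
    · push_neg at hiR
      obtain ⟨l, hl⟩ := hiR
      have hsum : ∑ j, W i j * y k j = ∑ j, W i j * (if l = k then 1 else 0) := by
        refine Finset.sum_congr rfl fun j _ => ?_
        by_cases hj : j ∈ S l
        · rw [hyS k l j hj]
        · rw [hsink l i hl j hj, zero_mul, zero_mul]
      rw [hsum, ← Finset.sum_mul, hyS k l i hl]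
  have hnn : ∀ k i, 0 ≤ y k i :=
    fun k => sink_min_principle W hWnn S hreach (y k) (fun i _ => hharmAll k i)
      (fun j l hj => by rw [hyS k l j hj]; split <;> norm_num)
  have hrowsum : ∀ i, ∑ k, y k i = 1 := by
    set v : Fin n → ℝ := fun i => (∑ k, y k i) - 1 with hv
    have hharmv : ∀ i, (∑ j, W i j) * v i = ∑ j, W i j * v j := by
      intro i
      have h1 : ∑ j, W i j * v j = (∑ k, (∑ j, W i j * y k j)) - ∑ j, W i j := by
        simp only [hv, mul_sub, mul_one]
        rw [Finset.sum_sub_distrib]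
        congr 1
        simp only [Finset.mul_sum]
        exact Finset.sum_comm
      rw [h1]
      rw [Finset.sum_congr rfl (fun k _ => (hharmAll k i).symm), ← Finset.mul_sum]
      simp only [hv]
      ring
    have hsinkv : ∀ j l, j ∈ S l → v j = 0 := by
      intro j l hj
      simp only [hv]
      have he : ∑ k, y k j = ∑ k, if l = k then 1 else 0 :=
        Finset.sum_congr rfl fun k _ => hyS k l j hj
      rw [he, Finset.sum_ite_eq]
      simp
    have h1 := sink_min_principle W hWnn S hreach v (fun i _ => hharmv i)
      (fun j l hj => (hsinkv j l hj).ge)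
    have h2 := sink_min_principle W hWnn S hreach (fun i => -v i)
      (fun i _ => by
        simp only [mul_neg]
        rw [Finset.sum_neg_distrib]
        exact neg_inj.mpr (hharmv i))
      (fun j l hj => by simp [hsinkv j l hj])
    intro i
    have ha : 0 ≤ (∑ k, y k i) - 1 := h1 i
    have hb : 0 ≤ -((∑ k, y k i) - 1) := h2 i
    linarith
  refine ⟨fun i k => y k i,
    ⟨fun i k => hnn k i, hrowsum, ?_,
      fun k i hi => by show y k i = 1; rw [hyS k k i hi, if_pos rfl],
      fun k l hlk i hi => by show y k i = 0; rw [hyS k l i hi, if_neg hlk]⟩, ?_⟩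
  · ext i k
    show ∑ j, L i j * y k j = 0
    have h0 : (L *ᵥ fun j => y k j) i = ∑ j, L i j * y k j := rfl
    have h := hLmv (fun j => y k j) i
    rw [h0] at h
    rw [h, hharmAll k i, sub_self]
  · rintro H' ⟨hnn', hrow1', hLH', hone', hzero'⟩
    ext i k
    show H' i k = y k i
    have hharm' : ∀ i, (∑ j, W i j) * H' i k = ∑ j, W i j * H' j k := by
      intro i
      have h : (L * H') i k = 0 := by rw [hLH']; rfl
      rw [Matrix.mul_apply] at h
      have h0 : (L *ᵥ fun j => H' j k) i = ∑ j, L i j * H' j k := rfl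
      have h2 := hLmv (fun j => H' j k) i
      rw [h0] at h2
      rw [h] at h2
      linarith
    set v : Fin n → ℝ := fun i => H' i k - y k i with hv
    have hharmv : ∀ i, (∑ j, W i j) * v i = ∑ j, W i j * v j := by
      intro i
      simp only [hv, mul_sub]
      rw [Finset.sum_sub_distrib, hharm' i, hharmAll k i]
    have hsinkv : ∀ j l, j ∈ S l → v j = 0 := by
      intro j l hj
      simp only [hv]
      rw [hyS k l j hj]
      by_cases hlk : l = k
      · subst hlk
        rw [hone' l j hj, if_pos rfl]; ring
      · rw [hzero' k l hlk j hj, if_neg hlk]; ring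
    have h1 := sink_min_principle W hWnn S hreach v (fun i _ => hharmv i)
      (fun j l hj => (hsinkv j l hj).ge)
    have h2 := sink_min_principle W hWnn S hreach (fun i => -v i)
      (fun i _ => by
        simp only [mul_neg]
        rw [Finset.sum_neg_distrib]
        exact neg_inj.mpr (hharmv i))
      (fun j l hj => by simp [hsinkv j l hj])
    have ha : 0 ≤ H' i k - y k i := h1 i
    have hb : 0 ≤ -(H' i k - y k i) := h2 i
    linarith
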